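/- Let A have nonpositive off-diagonal entries and set U_A = max_i (A_{i...i} + C_i) with C_i = Σ_{non-diagonal tuples} |A_{i i2...im}|, and C = U_A·I - A. Then C is a nonnegative tensor, and U_A - ρ(C) is the smallest real eigenvalue of A; in particular A is an M-tensor if and only if U_A - ρ(C) > 0. -/

import Mathlib

open scoped BigOperators

/-- Action of an `(k+1)`-order `n`-dimensional real tensor on a complex vector:
`(A x^{m-1})_i = ∑_{i2,...,im} A_{i i2...im} x_{i2} ⋯ x_{im}` (here `k = m-1`). -/
noncomputable def tApplyC {n k : ℕ} (A : Fin n → (Fin k → Fin n) → ℝ) (x : Fin n → ℂ) (i : Fin n) : ℂ :=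
  ∑ j : Fin k → Fin n, (A i j : ℂ) * ∏ t, x (j t)

/-- Real version of the tensor action. -/
def tApplyR {n k : ℕ} (A : Fin n → (Fin k → Fin n) → ℝ) (x : Fin n → ℝ) (i : Fin n) : ℝ :=
  ∑ j : Fin k → Fin n, A i j * ∏ t, x (j t)

/-- `(lam, x)` is an eigenvalue-eigenvector pair: `x ≠ 0` and `A x^{m-1} = lam x^{[m-1]}`. -/
def IsEigPair {n k : ℕ} (A : Fin n → (Fin k → Fin n) → ℝ) (lam : ℂ) (x : Fin n → ℂ) : Prop :=
  x ≠ 0 ∧ ∀ i, tApplyC A x i = lam * x i ^ k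

/-- `lam` is an eigenvalue of `A`. -/
def IsEig {n k : ℕ} (A : Fin n → (Fin k → Fin n) → ℝ) (lam : ℂ) : Prop :=
  ∃ x, IsEigPair A lam x

/-- The set of moduli of eigenvalues of `A`. -/
def modSet {n k : ℕ} (A : Fin n → (Fin k → Fin n) → ℝ) : Set ℝ :=
  {r | ∃ lam, IsEig A lam ∧ r = ‖lam‖}

/-- The spectral radius: supremum of moduli of eigenvalues. -/
noncomputable def specRad {n k : ℕ} (A : Fin n → (Fin k → Fin n) → ℝ) : ℝ :=
  sSup (modSet A)

/-- The identity tensor: entries `δ_{i i2...im}`. -/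
noncomputable def idT (n k : ℕ) : Fin n → (Fin k → Fin n) → ℝ :=
  fun i j => if (∀ t, j t = i) then 1 else 0

/-- Entrywise nonnegative tensor. -/
def NonnegT {n k : ℕ} (A : Fin n → (Fin k → Fin n) → ℝ) : Prop := ∀ i j, 0 ≤ A i j

/-- `A` is an M-tensor: `A = c I - B` with `B ≥ 0` and `c > ρ(B)`. -/
def IsMTensor {n k : ℕ} (A : Fin n → (Fin k → Fin n) → ℝ) : Prop :=
  ∃ (B : Fin n → (Fin k → Fin n) → ℝ) (c : ℝ),
    NonnegT B ∧ specRad B < c ∧ ∀ i j, A i j = c * idT n k i j - B i j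

/-- `ρ(A)` is an eigenvalue of `A` and bounds the modulus of every eigenvalue
(the Yang–Yang theorem for nonnegative tensors). -/
def HasSpecRad {n k : ℕ} (A : Fin n → (Fin k → Fin n) → ℝ) : Prop :=
  IsEig A (specRad A) ∧ ∀ lam, IsEig A lam → ‖lam‖ ≤ specRad A

/-- Off-diagonal entries of `A` are all nonpositive (`A ∈ 𝕫`). -/
def ZTensor {n k : ℕ} (A : Fin n → (Fin k → Fin n) → ℝ) : Prop :=
  ∀ i j, (¬ ∀ t, j t = i) → A i j ≤ 0

/-- Irreducibility of a tensor. -/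
def IrreducibleT {n k : ℕ} (A : Fin n → (Fin k → Fin n) → ℝ) : Prop :=
  ¬ ∃ S : Set (Fin n), S.Nonempty ∧ S ≠ Set.univ ∧
      ∀ i ∈ S, ∀ j : Fin k → Fin n, (∀ t, j t ∉ S) → A i j = 0

/-- `C_i = ∑_{(i2,...,im) not all equal to i} |A_{i i2...im}|`. -/
noncomputable def offDiagSum {n k : ℕ} (A : Fin n → (Fin k → Fin n) → ℝ) (i : Fin n) : ℝ :=
  ∑ j ∈ Finset.univ.filter (fun j : Fin k → Fin n => ¬ ∀ t, j t = i), |A i j|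

lemma tApplyC_id {n k : ℕ} (x : Fin n → ℂ) (i : Fin n) :
    tApplyC (idT n k) x i = x i ^ k := by
  unfold tApplyC idT
  rw [Finset.sum_eq_single (fun _ => i : Fin k → Fin n)]
  · simp [Finset.prod_const]
  · intro j _ hj
    have h : ¬ ∀ t, j t = i := fun h => hj (funext h)
    simp [h]
  · intro h; exact absurd (Finset.mem_univ _) h

lemma shift_apply {n k : ℕ} (A D : Fin n → (Fin k → Fin n) → ℝ) (c : ℝ)
    (hD : ∀ i j, D i j = c * idT n k i j - A i j) (x : Fin n → ℂ) (i : Fin n) :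
    tApplyC D x i = (c : ℂ) * x i ^ k - tApplyC A x i := by
  have h1 : tApplyC D x i = (c:ℂ) * tApplyC (idT n k) x i - tApplyC A x i := by
    unfold tApplyC
    rw [Finset.mul_sum, ← Finset.sum_sub_distrib]
    refine Finset.sum_congr rfl fun j _ => ?_
    rw [hD]; push_cast; ring
  rw [h1, tApplyC_id]

lemma shift_eig {n k : ℕ} (A D : Fin n → (Fin k → Fin n) → ℝ) (c : ℝ)
    (hD : ∀ i j, D i j = c * idT n k i j - A i j) (lam : ℂ) (h : IsEig A lam) :
    IsEig D ((c:ℂ) - lam) := by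
  obtain ⟨x, hx, hev⟩ := h
  exact ⟨x, hx, fun i => by rw [shift_apply A D c hD, hev i]; ring⟩

/-- with `U_A = max_i (A_{i...i} + C_i)` and `C = U_A I - A`, the tensor `C` is
nonnegative, `U_A - ρ(C)` is the smallest real eigenvalue of `A`, and `A` is an M-tensor
iff `U_A - ρ(C) > 0`. -/
theorem smallest_real_eig {n k : ℕ} (hn : 0 < n)
    (A C : Fin n → (Fin k → Fin n) → ℝ) (U : ℝ) (hZ : ZTensor A)
    (hU : U = Finset.univ.sup' (Finset.univ_nonempty_iff.mpr (Fin.pos_iff_nonempty.mp hn))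
        (fun i => A i (fun _ => i) + offDiagSum A i))
    (hC : ∀ i j, C i j = U * idT n k i j - A i j)
    (hYY : ∀ D : Fin n → (Fin k → Fin n) → ℝ, NonnegT D → HasSpecRad D) :
    NonnegT C ∧
    IsEig A ((U - specRad C : ℝ) : ℂ) ∧
    (∀ lam : ℝ, IsEig A (lam : ℂ) → U - specRad C ≤ lam) ∧
    (IsMTensor A ↔ 0 < U - specRad C) := by
  have hCnn : NonnegT C := by
    intro i j
    rw [hC]
    by_cases h : ∀ t, j t = i
    · have hid : idT n k i j = 1 := if_pos h
      have hj : j = fun _ => i := funext h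
      have h1 : A i (fun _ => i) + offDiagSum A i ≤ U := by
        rw [hU]; exact Finset.le_sup' (fun i => A i (fun _ => i) + offDiagSum A i) (Finset.mem_univ i)
      have h2 : 0 ≤ offDiagSum A i :=
        Finset.sum_nonneg fun _ _ => abs_nonneg _
      rw [hid, hj]; linarith
    · have hid : idT n k i j = 0 := if_neg h
      have := hZ i j h
      rw [hid]; linarith
  have hAC : ∀ i j, A i j = U * idT n k i j - C i j := fun i j => by
    have := hC i j; linarith
  obtain ⟨hCeig, hCbd⟩ := hYY C hCnn
  have heq : ((U - specRad C : ℝ) : ℂ) = (U:ℂ) - (specRad C : ℝ) := by push_cast; ring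
  have hAeig : IsEig A ((U - specRad C : ℝ) : ℂ) := by
    rw [heq]; exact shift_eig C A U hAC _ hCeig
  refine ⟨hCnn, hAeig, ?_, ?_⟩
  · intro lam hlam
    have h1 : IsEig C ((U:ℂ) - lam) := shift_eig A C U hC _ hlam
    have h2 : ‖(U:ℂ) - lam‖ ≤ specRad C := hCbd _ h1
    have h3 : ((U:ℂ) - (lam:ℂ)) = ((U - lam : ℝ) : ℂ) := by push_cast; ring
    rw [h3, Complex.norm_real, Real.norm_eq_abs] at h2
    have := le_abs_self (U - lam)
    linarith
  · constructor
    · rintro ⟨B, c, hBnn, hlt, hA⟩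
      have hBA : ∀ i j, B i j = c * idT n k i j - A i j := fun i j => by
        have := hA i j; linarith
      have h1 : IsEig B ((c:ℂ) - ((U - specRad C : ℝ) : ℂ)) :=
        shift_eig A B c hBA _ hAeig
      have h2 : ‖(c:ℂ) - ((U - specRad C : ℝ) : ℂ)‖ ≤ specRad B :=
        (hYY B hBnn).2 _ h1
      have h3 : ((c:ℂ) - ((U - specRad C : ℝ) : ℂ)) = ((c - (U - specRad C) : ℝ) : ℂ) := by
        push_cast; ring
      rw [h3, Complex.norm_real, Real.norm_eq_abs] at h2
      have := le_abs_self (c - (U - specRad C))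
      linarith
    · intro hpos
      exact ⟨C, U, hCnn, by linarith, hAC⟩
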